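/- Let O be a finite set, w a weight on K_O, and T a minimum spanning tree of w. Then the single linkage ultra-metric SL(w) equals α(T, w|_T), i.e., SL(w)(x,y) is the maximum w-weight of an edge on the unique path in T from x to y. -/

import Mathlib

set_option linter.unusedSectionVars false


open SimpleGraph Finset

variable {V : Type*} [Fintype V] [DecidableEq V]

/-- Total weight of (the edge set of) a simple graph `T` under edge weights `w`. -/
noncomputable def totalWeight (w : Sym2 V → ℝ) (T : SimpleGraph V) : ℝ :=
  ∑ e ∈ (Set.toFinite T.edgeSet).toFinset, w e

/-- `T` is a minimum spanning tree of the complete graph on `V` with weights `w`. -/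
def IsMST (w : Sym2 V → ℝ) (T : SimpleGraph V) : Prop :=
  T.IsTree ∧ ∀ T' : SimpleGraph V, T'.IsTree → totalWeight w T ≤ totalWeight w T'

/-- A weight on the complete graph: nonnegative, vanishing on the diagonal. -/
def IsWeight (d : Sym2 V → ℝ) : Prop :=
  (∀ e, 0 ≤ d e) ∧ ∀ x : V, d s(x, x) = 0

/-- An ultra-metric, encoded as a function on unordered pairs. -/
def IsUltrametric (u : Sym2 V → ℝ) : Prop :=
  IsWeight u ∧ ∀ x y z : V, u s(x, z) ≤ max (u s(x, y)) (u s(y, z))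

/-- A (pseudo-)metric, encoded as a function on unordered pairs. -/
def IsMetric (d : Sym2 V → ℝ) : Prop :=
  IsWeight d ∧ ∀ x y z : V, d s(x, z) ≤ d s(x, y) + d s(y, z)

/-- The single linkage ultra-metric of a weight `d`. -/
noncomputable def SL (d : Sym2 V → ℝ) (e : Sym2 V) : ℝ :=
  sSup {r | ∃ u : Sym2 V → ℝ, IsUltrametric u ∧ u ≤ d ∧ u e = r}

/-- Maximum weight of an edge along a walk (0 for the empty walk). -/
noncomputable def pathMax (w : Sym2 V → ℝ) {T : SimpleGraph V} {x y : V}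
    (p : T.Walk x y) : ℝ :=
  (p.edges.map w).foldr max 0

/-- Sum of weights of the edges along a walk. -/
noncomputable def pathSum (w : Sym2 V → ℝ) {T : SimpleGraph V} {x y : V}
    (p : T.Walk x y) : ℝ :=
  (p.edges.map w).sum

/-- `alpha T hT w x y`: max weight of an edge on the unique path in the tree `T` from `x` to `y`. -/
noncomputable def alpha (T : SimpleGraph V) (hT : T.IsTree) (w : Sym2 V → ℝ)
    (x y : V) : ℝ :=
  pathMax w (hT.existsUnique_path x y).exists.choose

/-- `omega T hT w x y`: the tree metric, the sum of weights along the unique path in `T`. -/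
noncomputable def treeOmega (T : SimpleGraph V) (hT : T.IsTree) (w : Sym2 V → ℝ)
    (x y : V) : ℝ :=
  pathSum w (hT.existsUnique_path x y).exists.choose

/-- Ultra-metric as a two-variable function. -/
def IsUltrametricFn (u : V → V → ℝ) : Prop :=
  (∀ x y, 0 ≤ u x y) ∧ (∀ x, u x x = 0) ∧ (∀ x y, u x y = u y x) ∧
    ∀ x y z, u x z ≤ max (u x y) (u y z)

-- list lemmas
lemma foldrMax_nonneg (l : List ℝ) : 0 ≤ l.foldr max 0 := by
  induction l with
  | nil => simp
  | cons a t ih => exact le_trans ih (le_max_right _ _)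

lemma le_foldrMax {l : List ℝ} {a : ℝ} (h : a ∈ l) : a ≤ l.foldr max 0 := by
  induction l with
  | nil => simp at h
  | cons b t ih =>
    rcases List.mem_cons.1 h with rfl | h
    · exact le_max_left _ _
    · exact le_trans (ih h) (le_max_right _ _)

lemma foldrMax_le {l : List ℝ} {c : ℝ} (h0 : 0 ≤ c) (h : ∀ a ∈ l, a ≤ c) :
    l.foldr max 0 ≤ c := by
  induction l with
  | nil => simpa
  | cons b t ih =>
    exact max_le (h b (by simp)) (ih fun a ha => h a (by simp [ha]))

lemma exists_foldrMax {l : List ℝ} (h : 0 < l.foldr max 0) :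
    ∃ a ∈ l, l.foldr max 0 ≤ a := by
  induction l with
  | nil => simp at h
  | cons b t ih =>
    rcases le_total (t.foldr max 0) b with hb | hb
    · exact ⟨b, by simp, by simp [max_eq_left hb]⟩
    · have ht : 0 < t.foldr max 0 := lt_of_lt_of_le h (by simpa using max_le hb le_rfl)
      obtain ⟨a, ha, ha'⟩ := ih ht
      exact ⟨a, by simp [ha], by simpa [max_eq_right hb] using ha'⟩

section PM
variable {T : SimpleGraph V} {w : Sym2 V → ℝ}

lemma pathMax_nonneg {x y : V} (p : T.Walk x y) : 0 ≤ pathMax w p := foldrMax_nonneg _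

lemma le_pathMax {x y : V} {p : T.Walk x y} {e : Sym2 V} (h : e ∈ p.edges) :
    w e ≤ pathMax w p := le_foldrMax (List.mem_map_of_mem (f := w) h)

lemma pathMax_le {x y : V} {p : T.Walk x y} {c : ℝ} (h0 : 0 ≤ c)
    (h : ∀ e ∈ p.edges, w e ≤ c) : pathMax w p ≤ c := by
  apply foldrMax_le h0
  intro a ha
  obtain ⟨e, he, rfl⟩ := List.mem_map.1 ha
  exact h e he

lemma pathMax_le_pathMax {x y x' y' : V} {p : T.Walk x y} {q : T.Walk x' y'}
    (h : ∀ g ∈ p.edges, g ∈ q.edges) : pathMax w p ≤ pathMax w q :=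
  pathMax_le (pathMax_nonneg q) fun g hg => le_pathMax (h g hg)

lemma exists_pathMax {x y : V} {p : T.Walk x y} (h : 0 < pathMax w p) :
    ∃ g ∈ p.edges, pathMax w p ≤ w g := by
  obtain ⟨a, ha, hle⟩ := exists_foldrMax h
  obtain ⟨g, hg, rfl⟩ := List.mem_map.1 ha
  exact ⟨g, hg, hle⟩

lemma alpha_eq (hT : T.IsTree) {x y : V} (q : T.Walk x y) (hq : q.IsPath) :
    alpha T hT w x y = pathMax w q := by
  have h := (hT.existsUnique_path x y).unique (hT.existsUnique_path x y).exists.choose_spec hq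
  rw [alpha, h]

lemma ultra_le_pathMax {u : Sym2 V → ℝ} (hu : IsUltrametric u) {x y : V} (p : T.Walk x y) :
    u s(x, y) ≤ pathMax u p := by
  induction p with
  | nil => rw [hu.1.2]; exact pathMax_nonneg _
  | @cons a b c hadj q ih =>
    have h2 : pathMax u (Walk.cons hadj q) = max (u s(a, b)) (pathMax u q) := by
      simp [pathMax]
    rw [h2]
    exact (hu.2 a b c).trans (max_le_max le_rfl ih)

end PM

lemma walk_split {G : SimpleGraph V} {a b : V} {u v : V} (q : G.Walk u v)
    (h : s(a, b) ∈ q.edges) :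
    (∃ (q₁ : G.Walk u a) (q₂ : G.Walk b v),
       q.edges = q₁.edges ++ s(a, b) :: q₂.edges ∧ s(a, b) ∉ q₁.edges) ∨
    (∃ (q₁ : G.Walk u b) (q₂ : G.Walk a v),
       q.edges = q₁.edges ++ s(a, b) :: q₂.edges ∧ s(a, b) ∉ q₁.edges) := by
  induction q with
  | nil => simp at h
  | @cons u u' v hadj q ih =>
    by_cases he : s(u, u') = s(a, b)
    · rcases Sym2.eq_iff.1 he with ⟨rfl, rfl⟩ | ⟨rfl, rfl⟩
      · exact Or.inl ⟨Walk.nil, q, by simp, by simp⟩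
      · exact Or.inr ⟨Walk.nil, q, by simp, by simp⟩
    · have h' : s(a, b) ∈ q.edges := by
        rcases List.mem_cons.1 h with hh | hh
        · exact absurd hh.symm he
        · exact hh
      rcases ih h' with ⟨q₁, q₂, heq, hni⟩ | ⟨q₁, q₂, heq, hni⟩
      · refine Or.inl ⟨Walk.cons hadj q₁, q₂, by simp [heq], ?_⟩
        simp only [Walk.edges_cons, List.mem_cons]
        rintro (hh | hh)
        · exact he hh.symm
        · exact hni hh
      · refine Or.inr ⟨Walk.cons hadj q₁, q₂, by simp [heq], ?_⟩
        simp only [Walk.edges_cons, List.mem_cons]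
        rintro (hh | hh)
        · exact he hh.symm
        · exact hni hh

lemma reachable_delete {G : SimpleGraph V} {e : Sym2 V} {u v : V} (q : G.Walk u v)
    (h : e ∉ q.edges) : (G.deleteEdges {e}).Reachable u v :=
  ⟨q.toDeleteEdges {e} (fun e' he' => by
    simp only [Set.mem_singleton_iff]
    rintro rfl
    exact h he')⟩

lemma exchange_false {w : Sym2 V → ℝ} {T : SimpleGraph V} (hT : IsMST w T)
    {x y a b : V} (hxy : x ≠ y) (hnadj : ¬ T.Adj x y)
    (p : T.Walk x y) (hp : p.IsPath) (hep : s(a, b) ∈ p.edges)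
    (hlt : w s(x, y) < w s(a, b)) : False := by
  set f : Sym2 V := s(x, y) with hf
  set e : Sym2 V := s(a, b) with he
  set T' : SimpleGraph V := T.deleteEdges {e} ⊔ fromEdgeSet {f} with hT'def
  have hfT : f ∉ T.edgeSet := hnadj
  have heT : e ∈ T.edgeSet := p.edges_subset_edgeSet hep
  have hef : e ≠ f := fun h => by rw [h] at hlt; exact lt_irrefl _ hlt
  have hmem : ∀ g, g ∈ T'.edgeSet ↔ (g ∈ T.edgeSet ∧ g ≠ e) ∨ g = f := by
    intro g
    rw [hT'def, edgeSet_sup, edgeSet_deleteEdges, edgeSet_fromEdgeSet]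
    simp only [Set.mem_union, Set.mem_diff, Set.mem_singleton_iff, Set.mem_setOf_eq]
    constructor
    · rintro (⟨hg, hge⟩ | ⟨rfl, -⟩)
      · exact Or.inl ⟨hg, hge⟩
      · exact Or.inr rfl
    · rintro (⟨hg, hge⟩ | rfl)
      · exact Or.inl ⟨hg, hge⟩
      · refine Or.inr ⟨rfl, ?_⟩
        simp [hf, Sym2.mk_isDiag_iff, hxy]
  have hAdjxy : T'.Adj x y := by
    rw [hT'def, sup_adj, fromEdgeSet_adj]
    exact Or.inr ⟨rfl, hxy⟩
  have hdel_le : T.deleteEdges {e} ≤ T' := by rw [hT'def]; exact le_sup_left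
  -- both a and b reach x in T'
  have hab : T'.Reachable a x ∧ T'.Reachable b x := by
    have hnd : p.edges.Nodup := hp.isTrail.edges_nodup
    rcases walk_split p hep with ⟨q₁, q₂, heq, hni⟩ | ⟨q₁, q₂, heq, hni⟩
    · have h2 : e ∉ q₂.edges := by
        rw [heq] at hnd
        exact (List.nodup_cons.1 (List.nodup_append.1 hnd).2.1).1
      refine ⟨((reachable_delete q₁ hni).mono hdel_le).symm, ?_⟩
      exact ((reachable_delete q₂ h2).mono hdel_le).trans hAdjxy.symm.reachable
    · have h2 : e ∉ q₂.edges := by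
        rw [heq] at hnd
        exact (List.nodup_cons.1 (List.nodup_append.1 hnd).2.1).1
      refine ⟨((reachable_delete q₂ h2).mono hdel_le).trans hAdjxy.symm.reachable, ?_⟩
      exact ((reachable_delete q₁ hni).mono hdel_le).symm
  have hvx : ∀ v, T'.Reachable v x := by
    intro v
    obtain ⟨q⟩ := hT.1.isConnected.preconnected v x
    by_cases hq : e ∈ q.edges
    · rcases walk_split (a := a) (b := b) q hq with ⟨q₁, _, _, hni'⟩ | ⟨q₁, _, _, hni'⟩
      · exact ((reachable_delete q₁ hni').mono hdel_le).trans hab.1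
      · exact ((reachable_delete q₁ hni').mono hdel_le).trans hab.2
    · exact (reachable_delete q hq).mono hdel_le
  have hconn : T'.Connected := by
    rw [connected_iff]
    exact ⟨fun u v2 => (hvx u).trans (hvx v2).symm, ⟨x⟩⟩
  have hacy : T'.IsAcyclic := by
    intro v c hc
    by_cases hfc : f ∈ c.edges
    · have hndc : c.edges.Nodup := hc.isCircuit.isTrail.edges_nodup
      have key : ∀ {v' : V} (q₁ : T'.Walk v' x) (q₂ : T'.Walk y v'),
          f ∉ q₁.edges → f ∉ q₂.edges → False := by
        intro v' q₁ q₂ hn1 hn2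
        have hW : f ∉ (q₂.append q₁).edges := by
          rw [Walk.edges_append]
          simp only [List.mem_append]
          rintro (hh | hh)
          · exact hn2 hh
          · exact hn1 hh
        have hWT : ∀ g ∈ (q₂.append q₁).edges, g ∈ T.edgeSet := by
          intro g hg
          rcases (hmem g).1 ((q₂.append q₁).edges_subset_edgeSet hg) with ⟨hg', _⟩ | rfl
          · exact hg'
          · exact absurd hg hW
        have heW : e ∉ (q₂.append q₁).edges := by
          intro hg
          rcases (hmem e).1 ((q₂.append q₁).edges_subset_edgeSet hg) with ⟨_, hne⟩ | hh
          · exact hne rfl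
          · exact hef hh
        set W' : T.Walk y x := (q₂.append q₁).transfer T hWT with hW'def
        have heW' : e ∉ W'.edges := by rwa [hW'def, Walk.edges_transfer]
        have hpath : W'.reverse.bypass.IsPath := Walk.bypass_isPath _
        have hpe : p = W'.reverse.bypass := (hT.1.existsUnique_path x y).unique hp hpath
        have : e ∈ W'.reverse.edges :=
          Walk.edges_bypass_subset _ (hpe ▸ hep)
        rw [Walk.edges_reverse, List.mem_reverse] at this
        exact heW' this
      rcases walk_split (a := x) (b := y) c hfc with ⟨q₁, q₂, heqc, hnic⟩ | ⟨q₁, q₂, heqc, hnic⟩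
      · have h2 : f ∉ q₂.edges := by
          rw [heqc] at hndc
          exact (List.nodup_cons.1 (List.nodup_append.1 hndc).2.1).1
        exact key q₁ q₂ hnic h2
      · have h2 : f ∉ q₂.edges := by
          rw [heqc] at hndc
          exact (List.nodup_cons.1 (List.nodup_append.1 hndc).2.1).1
        exact key q₂.reverse q₁.reverse (by simpa [Walk.edges_reverse] using h2)
          (by simpa [Walk.edges_reverse] using hnic)
    · have hCT : ∀ g ∈ c.edges, g ∈ T.edgeSet := by
        intro g hg
        rcases (hmem g).1 (c.edges_subset_edgeSet hg) with ⟨hg', _⟩ | rfl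
        · exact hg'
        · exact absurd hg hfc
      exact hT.1.IsAcyclic (c.transfer T hCT) (hc.transfer hCT)
  have hT'tree : T'.IsTree := ⟨hconn, hacy⟩
  have hle := hT.2 T' hT'tree
  have hfin : (Set.toFinite T'.edgeSet).toFinset
      = insert f (((Set.toFinite T.edgeSet).toFinset).erase e) := by
    ext g
    simp only [Set.Finite.mem_toFinset, Finset.mem_insert, Finset.mem_erase, hmem g]
    tauto
  have hsum : totalWeight w T' = w f + (totalWeight w T - w e) := by
    rw [totalWeight, hfin, Finset.sum_insert (by
      simp only [Finset.mem_erase, Set.Finite.mem_toFinset]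
      exact fun hh => hfT hh.2),
      Finset.sum_erase_eq_sub (by simpa [Set.Finite.mem_toFinset] using heT)]
    rfl
  rw [hsum] at hle
  have : w e ≤ w f := by linarith
  exact absurd hlt (not_lt.2 this)

section Alpha
variable {T : SimpleGraph V} {w : Sym2 V → ℝ}

lemma alpha_nonneg (hT : T.IsTree) (x y : V) : 0 ≤ alpha T hT w x y :=
  pathMax_nonneg _

lemma alpha_self (hT : T.IsTree) (x : V) : alpha T hT w x x = 0 := by
  rw [alpha_eq hT Walk.nil Walk.IsPath.nil]
  simp [pathMax]

lemma alpha_symm (hT : T.IsTree) (x y : V) : alpha T hT w x y = alpha T hT w y x := by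
  set p := (hT.existsUnique_path x y).exists.choose with hpdef
  have hp : p.IsPath := (hT.existsUnique_path x y).exists.choose_spec
  have h1 : alpha T hT w y x = pathMax w p.reverse := alpha_eq hT p.reverse hp.reverse
  have h2 : alpha T hT w x y = pathMax w p := rfl
  rw [h1, h2]
  apply le_antisymm
  · exact pathMax_le_pathMax fun g hg => by rwa [Walk.edges_reverse, List.mem_reverse]
  · exact pathMax_le_pathMax fun g hg => by rwa [Walk.edges_reverse, List.mem_reverse] at hg

lemma alpha_ultra (hT : T.IsTree) (x y z : V) :
    alpha T hT w x z ≤ max (alpha T hT w x y) (alpha T hT w y z) := by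
  set p := (hT.existsUnique_path x y).exists.choose with hpdef
  set q := (hT.existsUnique_path y z).exists.choose with hqdef
  have hr : alpha T hT w x z = pathMax w (p.append q).bypass :=
    alpha_eq hT _ (Walk.bypass_isPath _)
  rw [hr]
  refine pathMax_le (le_trans (pathMax_nonneg p) (le_max_left _ _)) ?_
  intro g hg
  have hg' := Walk.edges_bypass_subset _ hg
  rw [Walk.edges_append, List.mem_append] at hg'
  rcases hg' with hg' | hg'
  · exact le_trans (le_pathMax hg') (le_max_left _ _)
  · exact le_trans (le_pathMax hg') (le_max_right _ _)

lemma alpha_le_w (hw : IsWeight w) (hT : IsMST w T) (x y : V) :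
    alpha T hT.1 w x y ≤ w s(x, y) := by
  by_cases hxy : x = y
  · subst hxy
    rw [alpha_self, hw.2]
  by_cases hadj : T.Adj x y
  · have hp1 : (Walk.cons hadj Walk.nil).IsPath := by
      rw [Walk.cons_isPath_iff]
      exact ⟨Walk.IsPath.nil, by simpa using hxy⟩
    rw [alpha_eq hT.1 _ hp1]
    simp only [pathMax, Walk.edges_cons, Walk.edges_nil, List.map_cons, List.map_nil,
      List.foldr_cons, List.foldr_nil]
    exact max_le le_rfl (hw.1 _)
  · by_contra hcon
    push_neg at hcon
    set p := (hT.1.existsUnique_path x y).exists.choose with hpdef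
    have hp : p.IsPath := (hT.1.existsUnique_path x y).exists.choose_spec
    have halpha : alpha T hT.1 w x y = pathMax w p := rfl
    rw [halpha] at hcon
    have h0 : 0 < pathMax w p := lt_of_le_of_lt (hw.1 _) hcon
    obtain ⟨g, hg, hge⟩ := exists_pathMax h0
    have hlt : w s(x, y) < w g := lt_of_lt_of_le hcon hge
    revert hg hlt
    induction g using Sym2.ind with
    | _ a b => exact fun hg hlt => exchange_false hT hxy hadj p hp hg hlt

end Alpha


/-- if `T` is an MST of `w` then `SL w = alpha T w`. -/
theorem SL_eq_alpha (w : Sym2 V → ℝ) (hw : IsWeight w)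
    (T : SimpleGraph V) (hT : IsMST w T) :
    ∀ x y : V, SL w s(x, y) = alpha T hT.1 w x y := by
  intro x y
  have hbound : ∀ r ∈ {r | ∃ u : Sym2 V → ℝ, IsUltrametric u ∧ u ≤ w ∧ u s(x, y) = r},
      r ≤ alpha T hT.1 w x y := by
    rintro r ⟨u, hu, hle, rfl⟩
    set p := (hT.1.existsUnique_path x y).exists.choose with hpdef
    have h1 : u s(x, y) ≤ pathMax u p := ultra_le_pathMax hu p
    have h2 : pathMax u p ≤ pathMax w p :=
      pathMax_le (pathMax_nonneg _) fun g hg => le_trans (hle g) (le_pathMax hg)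
    exact le_trans h1 h2
  have hmem : alpha T hT.1 w x y ∈
      {r | ∃ u : Sym2 V → ℝ, IsUltrametric u ∧ u ≤ w ∧ u s(x, y) = r} := by
    refine ⟨Sym2.lift ⟨alpha T hT.1 w, fun a b => alpha_symm hT.1 a b⟩, ⟨⟨?_, ?_⟩, ?_⟩, ?_, ?_⟩
    · intro g
      induction g using Sym2.ind with
      | _ a b => simpa using alpha_nonneg hT.1 a b
    · intro a
      simpa using alpha_self hT.1 a
    · intro a b c
      simpa using alpha_ultra hT.1 a b c
    · intro g
      induction g using Sym2.ind with
      | _ a b => simpa using alpha_le_w hw hT a b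
    · simp
  exact le_antisymm (csSup_le ⟨_, hmem⟩ hbound)
    (le_csSup ⟨alpha T hT.1 w x y, hbound⟩ hmem)
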